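/- Let S be a nonempty set and, for each σ ∈ S, let P_σ be a probability measure on a common measurable sample space. Let (S_n)_{n≥1} be real random variables, and let μ be a Borel probability measure on ℝ with continuous cumulative distribution function. Suppose that for every ε > 0 there exist real random variables (U_n^ε)_{n≥1} and (V_n^ε)_{n≥1} with S_n = U_n^ε + V_n^ε for all n, such that: (i) for every a ∈ ℝ, lim_{n→∞} sup_{σ∈S} | P_σ( U_n^ε ≥ a ) − μ([a, ∞)) | = 0; and (ii) sup_{n≥1} sup_{σ∈S} P_σ( |V_n^ε| ≥ ε ) ≤ ε. Then for every a ∈ ℝ, lim_{n→∞} sup_{σ∈S} | P_σ( S_n ≥ a ) − μ([a, ∞)) | = 0. -/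
import Mathlib

open MeasureTheory Filter

lemma cdf_cont_singleton_null (μ : Measure ℝ) [IsProbabilityMeasure μ]
    (hcdf : Continuous fun x : ℝ => (μ (Set.Iic x)).toReal) (b : ℝ) : μ {b} = 0 := by
  set f : ℝ → ℝ := fun x => (μ (Set.Iic x)).toReal with hf
  have key : ∀ ε > (0:ℝ), (μ {b}).toReal ≤ ε := by
    intro ε hε
    have hc : ContinuousAt f b := hcdf.continuousAt
    rw [Metric.continuousAt_iff] at hc
    obtain ⟨d, hd, hball⟩ := hc ε hε
    set x := b - d/2 with hx
    have hxb : x < b := by simp [hx]; positivity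
    have hsub : {b} ⊆ Set.Iic b \ Set.Iic x := by
      intro y hy; simp_all [Set.mem_diff, hy]
    have h1 : μ (Set.Iic b \ Set.Iic x) = μ (Set.Iic b) - μ (Set.Iic x) :=
      measure_diff (Set.Iic_subset_Iic.2 hxb.le) measurableSet_Iic.nullMeasurableSet
        (measure_ne_top μ _)
    have h2 : (μ (Set.Iic b \ Set.Iic x)).toReal = f b - f x := by
      rw [h1, ENNReal.toReal_sub_of_le (measure_mono (Set.Iic_subset_Iic.2 hxb.le))
        (measure_ne_top μ _)]
    have h3 : dist (f x) (f b) < ε := by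
      apply hball
      rw [Real.dist_eq, hx]
      rw [abs_of_nonpos (by linarith)]
      linarith
    have h4 : (μ {b}).toReal ≤ (μ (Set.Iic b \ Set.Iic x)).toReal :=
      ENNReal.toReal_le_toReal (measure_ne_top μ _) (measure_ne_top μ _) |>.2
        (measure_mono hsub)
    rw [Real.dist_eq] at h3
    have := abs_lt.1 h3
    linarith [h2 ▸ h4]
  have : (μ {b}).toReal = 0 := le_antisymm
    (le_of_forall_pos_le_add (by intro ε hε; simpa using key ε hε)) ENNReal.toReal_nonneg
  exact (ENNReal.toReal_eq_zero_iff _).1 this |>.resolve_right (measure_ne_top μ _)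

lemma cdf_cont_Ici (μ : Measure ℝ) [IsProbabilityMeasure μ]
    (hcdf : Continuous fun x : ℝ => (μ (Set.Iic x)).toReal) (b : ℝ) :
    (μ (Set.Ici b)).toReal = 1 - (μ (Set.Iic b)).toReal := by
  have hIci : μ (Set.Ici b) = μ (Set.Ioi b) := by
    have hs : Set.Ici b = {b} ∪ Set.Ioi b := by
      ext y; simp [le_iff_lt_or_eq, Set.mem_union, or_comm, eq_comm]
    refine le_antisymm ?_ (measure_mono (Set.Ioi_subset_Ici le_rfl))
    rw [hs]
    exact (measure_union_le _ _).trans (by simp [cdf_cont_singleton_null μ hcdf b])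
  have hc : μ (Set.Ioi b) = 1 - μ (Set.Iic b) := by
    rw [← Set.compl_Iic, measure_compl measurableSet_Iic (measure_ne_top μ _), measure_univ]
  rw [hIci, hc, ENNReal.toReal_sub_of_le prob_le_one ENNReal.one_ne_top, ENNReal.toReal_one]

/-- If `S_n = U_n^ε + V_n^ε` where the laws of `U_n^ε` converge to `μ` on half-lines uniformly
in the parameter `σ`, and the remainders `V_n^ε` are uniformly small in probability, then the
laws of `S_n` converge to `μ` on half-lines, uniformly in `σ` (here `μ` has a continuous
cumulative distribution function). -/
theorem uniform_convergence_of_truncated_decomposition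
    {S : Type*} [Nonempty S] {E : Type*} [MeasurableSpace E]
    (P : S → Measure E) (hP : ∀ σ, IsProbabilityMeasure (P σ))
    (Sn : ℕ → E → ℝ)
    (μ : Measure ℝ) [IsProbabilityMeasure μ]
    (hcdf : Continuous fun x : ℝ => (μ (Set.Iic x)).toReal)
    (h : ∀ ε > (0 : ℝ), ∃ U V : ℕ → E → ℝ,
      (∀ n : ℕ, Sn n = fun e => U n e + V n e) ∧
      (∀ a : ℝ, ∀ δ > (0 : ℝ), ∃ N : ℕ, ∀ n ≥ N, ∀ σ : S,
        |(P σ {e | a ≤ U n e}).toReal - (μ (Set.Ici a)).toReal| ≤ δ) ∧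
      (∀ n : ℕ, ∀ σ : S, (P σ {e | ε ≤ |V n e|}).toReal ≤ ε)) :
    ∀ a : ℝ, ∀ δ > (0 : ℝ), ∃ N : ℕ, ∀ n ≥ N, ∀ σ : S,
      |(P σ {e | a ≤ Sn n e}).toReal - (μ (Set.Ici a)).toReal| ≤ δ := by
  intro a δ hδ
  have hg : Continuous fun b : ℝ => (μ (Set.Ici b)).toReal := by
    have : (fun b : ℝ => (μ (Set.Ici b)).toReal)
        = fun b : ℝ => 1 - (μ (Set.Iic b)).toReal := by
      funext b; exact cdf_cont_Ici μ hcdf b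
    rw [this]; exact continuous_const.sub hcdf
  obtain ⟨d, hd, hball⟩ := Metric.continuousAt_iff.1 (hg.continuousAt (x := a)) (δ/4) (by linarith)
  set ε := min (d/2) (δ/4) with hε
  have hε0 : 0 < ε := lt_min (by linarith) (by linarith)
  have hεd : ε < d := lt_of_le_of_lt (min_le_left _ _) (by linarith)
  have hεδ : ε ≤ δ/4 := min_le_right _ _
  obtain ⟨U, V, hUV, hU, hV⟩ := h ε hε0
  obtain ⟨N1, hN1⟩ := hU (a - ε) (δ/4) (by linarith)
  obtain ⟨N2, hN2⟩ := hU (a + ε) (δ/4) (by linarith)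
  refine ⟨max N1 N2, fun n hn σ => ?_⟩
  have hle : ∀ (A B C : Set E), A ⊆ B ∪ C →
      (P σ A).toReal ≤ (P σ B).toReal + (P σ C).toReal := by
    intro A B C hABC
    have h1 : P σ A ≤ P σ B + P σ C := (measure_mono hABC).trans (measure_union_le _ _)
    have := (ENNReal.toReal_le_toReal (measure_ne_top _ _)
      (ENNReal.add_ne_top.2 ⟨measure_ne_top _ _, measure_ne_top _ _⟩)).2 h1
    rwa [ENNReal.toReal_add (measure_ne_top _ _) (measure_ne_top _ _)] at this
  have hs : ∀ e, Sn n e = U n e + V n e := fun e => by rw [hUV n]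
  have inc1 : {e | a ≤ Sn n e} ⊆ {e | a - ε ≤ U n e} ∪ {e | ε ≤ |V n e|} := by
    intro e he
    simp only [Set.mem_setOf_eq, hs e] at he
    by_cases hc : a - ε ≤ U n e
    · exact Or.inl hc
    · right; simp only [Set.mem_setOf_eq, le_abs]; left; linarith [not_le.1 hc]
  have inc2 : {e | a + ε ≤ U n e} ⊆ {e | a ≤ Sn n e} ∪ {e | ε ≤ |V n e|} := by
    intro e he
    simp only [Set.mem_setOf_eq] at he
    by_cases hc : a ≤ Sn n e
    · exact Or.inl hc
    · right
      have := hs e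
      simp only [Set.mem_setOf_eq, le_abs]
      right; have := not_le.1 hc; linarith
  have e1 := hle _ _ _ inc1
  have e2 := hle _ _ _ inc2
  have hv := hV n σ
  have hu1 := hN1 n (le_trans (le_max_left _ _) hn) σ
  have hu2 := hN2 n (le_trans (le_max_right _ _) hn) σ
  have hg1 : |(μ (Set.Ici (a - ε))).toReal - (μ (Set.Ici a)).toReal| ≤ δ/4 := by
    have := hball (x := a - ε) (by rw [Real.dist_eq]; rw [abs_of_nonpos (by linarith)]; linarith)
    rw [Real.dist_eq] at this; linarith [le_of_lt this]
  have hg2 : |(μ (Set.Ici (a + ε))).toReal - (μ (Set.Ici a)).toReal| ≤ δ/4 := by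
    have := hball (x := a + ε) (by rw [Real.dist_eq]; rw [abs_of_nonneg (by linarith)]; linarith)
    rw [Real.dist_eq] at this; linarith [le_of_lt this]
  have ha1 := abs_le.1 hu1
  have ha2 := abs_le.1 hu2
  have hb1 := abs_le.1 hg1
  have hb2 := abs_le.1 hg2
  rw [abs_le]
  constructor <;> [skip; skip] <;> obtain ⟨c1, c2⟩ := ha1 <;> linarith
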